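/- Let S be a standard Borel space. Then the Jordan decomposition maps μ ↦ μ⁺ and μ ↦ μ⁻, from the space M±(S) of finite signed measures on S to the space M(S) of finite measures on S, are measurable, where both spaces carry the σ-algebra generated by the evaluation maps μ ↦ μ(B) over measurable sets B ⊆ S. -/

import Mathlib

open MeasureTheory

/-- The σ-algebra on the space `M±(S)` of finite signed measures on `S`,
generated by the evaluation maps `μ ↦ μ B` over measurable sets `B`. -/
instance signedMeasureMeasurableSpace (S : Type*) [MeasurableSpace S] :
    MeasurableSpace (SignedMeasure S) :=
  ⨆ (B : Set S) (_ : MeasurableSet B),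
    MeasurableSpace.comap (fun μ : SignedMeasure S => μ B) inferInstance

section Aux

variable {S : Type*} [MeasurableSpace S]

/-- Evaluation at a measurable set is measurable on the space of signed measures. -/
lemma measurable_eval_signedMeasure {B : Set S} (hB : MeasurableSet B) :
    Measurable (fun μ : SignedMeasure S => μ B) :=
  Measurable.of_comap_le <| le_iSup₂_of_le B hB le_rfl

/-- A map into the space of signed measures is measurable if all evaluations are. -/
lemma measurable_signedMeasure_of_eval {X : Type*} [MeasurableSpace X]
    (f : X → SignedMeasure S)
    (h : ∀ B : Set S, MeasurableSet B → Measurable fun x => f x B) : Measurable f := by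
  rw [measurable_iff_comap_le]
  show MeasurableSpace.comap f (⨆ (B : Set S) (_ : MeasurableSet B),
      MeasurableSpace.comap (fun μ : SignedMeasure S => μ B) inferInstance) ≤ _
  simp_rw [MeasurableSpace.comap_iSup, MeasurableSpace.comap_comp]
  exact iSup₂_le fun B hB => (h B hB).comap_le

/-- A signed measure evaluated at a measurable set equals the difference of the
values of the parts of its Jordan decomposition. -/
lemma signedMeasure_apply_eq (μ : SignedMeasure S) {Z : Set S} (hZ : MeasurableSet Z) :
    μ Z = (μ.toJordanDecomposition.posPart Z).toReal
      - (μ.toJordanDecomposition.negPart Z).toReal := by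
  conv_lhs => rw [← μ.toSignedMeasure_toJordanDecomposition]
  rw [JordanDecomposition.toSignedMeasure, VectorMeasure.sub_apply,
    Measure.toSignedMeasure_apply_measurable hZ, Measure.toSignedMeasure_apply_measurable hZ]
  rfl

/-- The absolute value of a signed measure is bounded by its total variation. -/
lemma abs_signedMeasure_apply_le (μ : SignedMeasure S) {Z : Set S} (hZ : MeasurableSet Z) :
    |μ Z| ≤ (μ.totalVariation Z).toReal := by
  rw [signedMeasure_apply_eq μ hZ, SignedMeasure.totalVariation, Measure.add_apply,
    ENNReal.toReal_add (measure_ne_top _ _) (measure_ne_top _ _)]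
  have h1 : (0:ℝ) ≤ (μ.toJordanDecomposition.posPart Z).toReal := ENNReal.toReal_nonneg
  have h2 : (0:ℝ) ≤ (μ.toJordanDecomposition.negPart Z).toReal := ENNReal.toReal_nonneg
  rw [abs_sub_le_iff]
  constructor <;> linarith

open Set symmDiff in
/-- Key formula: the positive part of the Jordan decomposition, evaluated at a
measurable set `B`, is the supremum of `μ (A ∩ B)` over a generating countable
set algebra. -/
lemma posPart_apply_eq_iSup {𝒜 : Set (Set S)} (h𝒜 : IsSetAlgebra 𝒜)
    (hgen : ‹MeasurableSpace S› = MeasurableSpace.generateFrom 𝒜)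
    (μ : SignedMeasure S) {B : Set S} (hB : MeasurableSet B) :
    μ.toJordanDecomposition.posPart B = ⨆ A : 𝒜, ENNReal.ofReal (μ (↑A ∩ B)) := by
  have hA_meas : ∀ A ∈ 𝒜, MeasurableSet A := fun A hA =>
    hgen ▸ MeasurableSpace.measurableSet_generateFrom hA
  obtain ⟨i, hi₁, hi₂, hi₃, hpos, hneg⟩ := μ.toJordanDecomposition_spec
  -- value of a signed measure at a difference decomposition
  have hsplit : ∀ X Y : Set S, MeasurableSet X → MeasurableSet Y →
      μ X = μ (X \ Y) + μ (X ∩ Y) := by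
    intro X Y hX hY
    conv_lhs => rw [← Set.diff_union_inter X Y]
    exact VectorMeasure.of_union (Set.disjoint_sdiff_left.mono_right Set.inter_subset_right)
      (hX.diff hY) (hX.inter hY)
  have key : μ.toJordanDecomposition.posPart B = ENNReal.ofReal (μ (i ∩ B)) := by
    rw [hpos, SignedMeasure.toMeasureOfZeroLE_apply _ hi₂ hi₁ hB]
    exact (ENNReal.ofReal_eq_coe_nnreal _).symm
  haveI : IsFiniteMeasure μ.totalVariation := by
    unfold SignedMeasure.totalVariation; infer_instance
  have hdense : μ.totalVariation.MeasureDense 𝒜 :=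
    Measure.MeasureDense.of_generateFrom_isSetAlgebra_finite _ h𝒜 hgen
  refine le_antisymm ?_ ?_
  · rw [key]
    refine ENNReal.le_of_forall_pos_le_add fun ε hε _ => ?_
    have hε2 : (0:ℝ) < (ε : ℝ) / 2 := by positivity
    obtain ⟨A, hA, hμA⟩ := hdense.approx i hi₁ (measure_ne_top _ _) ((ε : ℝ) / 2) hε2
    have hAm : MeasurableSet A := hA_meas A hA
    -- bound μ (i ∩ B) - μ (A ∩ B) by the total variation of the symmetric difference
    have e1 : μ (i ∩ B) - μ (A ∩ B)
        = μ ((i ∩ B) \ (A ∩ B)) - μ ((A ∩ B) \ (i ∩ B)) := by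
      rw [hsplit (i ∩ B) (A ∩ B) (hi₁.inter hB) (hAm.inter hB),
        hsplit (A ∩ B) (i ∩ B) (hAm.inter hB) (hi₁.inter hB), Set.inter_comm (A ∩ B)]
      ring
    have hsub1 : (i ∩ B) \ (A ∩ B) ⊆ symmDiff i A := by
      intro x hx
      rw [Set.mem_symmDiff]
      exact Or.inl ⟨hx.1.1, fun hxA => hx.2 ⟨hxA, hx.1.2⟩⟩
    have hsub2 : (A ∩ B) \ (i ∩ B) ⊆ symmDiff i A := by
      intro x hx
      rw [Set.mem_symmDiff]
      exact Or.inr ⟨hx.1.1, fun hxi => hx.2 ⟨hxi, hx.1.2⟩⟩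
    have htv : (μ.totalVariation (symmDiff i A)).toReal < (ε : ℝ) / 2 := by
      rw [← ENNReal.ofReal_toReal (measure_ne_top μ.totalVariation (symmDiff i A))] at hμA
      exact (ENNReal.ofReal_lt_ofReal_iff hε2).mp hμA
    have hb1 : |μ ((i ∩ B) \ (A ∩ B))| ≤ (μ.totalVariation (symmDiff i A)).toReal :=
      (abs_signedMeasure_apply_le μ ((hi₁.inter hB).diff (hAm.inter hB))).trans
        (ENNReal.toReal_mono (measure_ne_top _ _) (measure_mono hsub1))
    have hb2 : |μ ((A ∩ B) \ (i ∩ B))| ≤ (μ.totalVariation (symmDiff i A)).toReal :=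
      (abs_signedMeasure_apply_le μ ((hAm.inter hB).diff (hi₁.inter hB))).trans
        (ENNReal.toReal_mono (measure_ne_top _ _) (measure_mono hsub2))
    have hreal : μ (i ∩ B) ≤ μ (A ∩ B) + (ε : ℝ) := by
      have := abs_le.mp hb1
      have := abs_le.mp hb2
      linarith [e1]
    calc ENNReal.ofReal (μ (i ∩ B)) ≤ ENNReal.ofReal (μ (A ∩ B) + (ε : ℝ)) :=
          ENNReal.ofReal_le_ofReal hreal
      _ ≤ ENNReal.ofReal (μ (A ∩ B)) + ENNReal.ofReal (ε : ℝ) := ENNReal.ofReal_add_le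
      _ ≤ (⨆ A : 𝒜, ENNReal.ofReal (μ (↑A ∩ B))) + ε := by
          rw [ENNReal.ofReal_coe_nnreal]
          exact add_le_add_left (le_iSup (fun A : 𝒜 => ENNReal.ofReal (μ (↑A ∩ B))) ⟨A, hA⟩) _
  · refine iSup_le fun A => ?_
    have hAm : MeasurableSet (A : Set S) := hA_meas A A.2
    refine ENNReal.ofReal_le_of_le_toReal ?_
    rw [signedMeasure_apply_eq μ (hAm.inter hB)]
    have h1 : (μ.toJordanDecomposition.posPart (↑A ∩ B)).toReal
        ≤ (μ.toJordanDecomposition.posPart B).toReal :=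
      ENNReal.toReal_mono (measure_ne_top _ _) (measure_mono Set.inter_subset_right)
    have h2 : (0:ℝ) ≤ (μ.toJordanDecomposition.negPart (↑A ∩ B)).toReal := ENNReal.toReal_nonneg
    linarith

variable [StandardBorelSpace S]

lemma jd_measurable_posPart :
    Measurable (fun μ : SignedMeasure S => μ.toJordanDecomposition.posPart) := by
  obtain ⟨b, hbc, hbgen⟩ := MeasurableSpace.CountablyGenerated.isCountablyGenerated (α := S)
  set 𝒜 := MeasureTheory.generateSetAlgebra b with h𝒜def
  have h𝒜 : IsSetAlgebra 𝒜 := isSetAlgebra_generateSetAlgebra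
  have hgen : ‹MeasurableSpace S› = MeasurableSpace.generateFrom 𝒜 := by
    rw [h𝒜def, generateFrom_generateSetAlgebra_eq, ← hbgen]
  haveI : Countable ↥𝒜 := (countable_generateSetAlgebra hbc).to_subtype
  apply Measure.measurable_of_measurable_coe
  intro B hB
  simp_rw [fun μ : SignedMeasure S => posPart_apply_eq_iSup h𝒜 hgen μ hB]
  refine Measurable.iSup fun A => ?_
  have hAm : MeasurableSet (A : Set S) :=
    hgen ▸ MeasurableSpace.measurableSet_generateFrom A.2
  exact ENNReal.measurable_ofReal.comp (measurable_eval_signedMeasure (hAm.inter hB))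

lemma jd_measurable_negPart :
    Measurable (fun μ : SignedMeasure S => μ.toJordanDecomposition.negPart) := by
  have hneg : (fun μ : SignedMeasure S => μ.toJordanDecomposition.negPart)
      = (fun μ : SignedMeasure S => μ.toJordanDecomposition.posPart) ∘ (fun μ => -μ) := by
    funext μ
    simp [Function.comp, SignedMeasure.toJordanDecomposition_neg,
      JordanDecomposition.neg_posPart]
  rw [hneg]
  refine jd_measurable_posPart.comp (measurable_signedMeasure_of_eval _ fun B hB => ?_)
  simp_rw [VectorMeasure.neg_apply]
  exact (measurable_eval_signedMeasure hB).neg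

end Aux

/-- for a standard Borel space `S`, the Jordan decomposition maps
`μ ↦ μ⁺` and `μ ↦ μ⁻` from `M±(S)` to `M(S)` are measurable, where `M(S)`
(the finite nonnegative measures) carries the σ-algebra induced by the
evaluation maps. -/
theorem jordanDecomposition_measurable (S : Type*) [MeasurableSpace S] [StandardBorelSpace S] :
    Measurable (fun μ : SignedMeasure S =>
      (⟨μ.toJordanDecomposition.posPart, inferInstance⟩ :
        {ν : Measure S // IsFiniteMeasure ν})) ∧
    Measurable (fun μ : SignedMeasure S =>
      (⟨μ.toJordanDecomposition.negPart, inferInstance⟩ :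
        {ν : Measure S // IsFiniteMeasure ν})) := by
  exact ⟨jd_measurable_posPart.subtype_mk, jd_measurable_negPart.subtype_mk⟩
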